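/- Let u be a degree-two vertex in a finite simple graph G with neighbors v and w that are not adjacent. Then {u,v} and {u,w} are both maximal cliques of G, and the maximal cliques of size ≥ 2 of G are exactly {u,v}, {u,w}, together with the maximal cliques of size ≥ 2 of G - u. -/

import Mathlib

open SimpleGraph

/-- A maximal clique: a clique not properly contained in any other clique. -/
def MaximalClique {V : Type*} (G : SimpleGraph V) (S : Set V) : Prop :=
  G.IsClique S ∧ ∀ T : Set V, G.IsClique T → S ⊆ T → S = T

/-- The graph obtained from `G` by deleting vertex `u` (removing all its incident edges). -/
def delVert {V : Type*} (G : SimpleGraph V) (u : V) : SimpleGraph V where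
  Adj a b := G.Adj a b ∧ a ≠ u ∧ b ≠ u
  symm := by constructor; intro a b h; exact ⟨h.1.symm, h.2.2, h.2.1⟩
  loopless := by constructor; intro a h; exact G.irrefl h.1

theorem stmt_2 {V : Type*} [Fintype V] (G : SimpleGraph V) (u v w : V)
    (hvw : v ≠ w) (hu : G.neighborSet u = {v, w}) (hnadj : ¬ G.Adj v w) :
    MaximalClique G {u, v} ∧ MaximalClique G {u, w} ∧
    {S : Set V | MaximalClique G S ∧ 2 ≤ S.ncard} =
      {({u, v} : Set V), {u, w}} ∪
        {S : Set V | MaximalClique (delVert G u) S ∧ 2 ≤ S.ncard} := by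
  have hadj : ∀ x, G.Adj u x ↔ x = v ∨ x = w := by
    intro x
    rw [← SimpleGraph.mem_neighborSet, hu]
    simp [Set.mem_insert_iff]
  have huv : G.Adj u v := (hadj v).2 (Or.inl rfl)
  have huw : G.Adj u w := (hadj w).2 (Or.inr rfl)
  have hneuv : u ≠ v := G.ne_of_adj huv
  have hneuw : u ≠ w := G.ne_of_adj huw
  -- maximality of pair cliques
  have hmaxpair : ∀ x y, G.Adj u x → (x = v ∨ x = w) → (y = v ∨ y = w) → x ≠ y →
      MaximalClique G {u, x} := by
    intro x y hux hx hy hxy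
    refine ⟨SimpleGraph.isClique_pair.2 (fun _ => hux), ?_⟩
    intro T hT hsub
    refine Set.Subset.antisymm hsub ?_
    intro z hz
    rcases eq_or_ne z u with rfl | hzu
    · exact Or.inl rfl
    have hz' : G.Adj u z := hT (hsub (Or.inl rfl)) hz hzu.symm
    rcases (hadj z).1 hz' with rfl | rfl
    · rcases hx with rfl | rfl
      · exact Or.inr rfl
      · -- x = w, z = v, both in T, adjacent, contradiction
        exact absurd (hT hz (hsub (Or.inr rfl)) hvw) hnadj
    · rcases hx with rfl | rfl
      · exact absurd (hT (hsub (Or.inr rfl)) hz hvw) hnadj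
      · exact Or.inr rfl
  have hmuv : MaximalClique G {u, v} := hmaxpair v w huv (Or.inl rfl) (Or.inr rfl) hvw
  have hmuw : MaximalClique G {u, w} := hmaxpair w v huw (Or.inr rfl) (Or.inl rfl) hvw.symm
  refine ⟨hmuv, hmuw, ?_⟩
  ext S
  simp only [Set.mem_setOf_eq, Set.mem_union, Set.mem_insert_iff, Set.mem_singleton_iff]
  constructor
  · rintro ⟨⟨hScl, hSmax⟩, hcard⟩
    by_cases hus : u ∈ S
    · -- S ⊆ {u,v} or S ⊆ {u,w}
      by_cases hws : w ∈ S
      · left; right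
        apply hSmax _ hmuw.1
        intro z hz
        rcases eq_or_ne z u with rfl | hzu
        · exact Or.inl rfl
        rcases (hadj z).1 (hScl hus hz hzu.symm) with rfl | rfl
        · exact absurd (hScl hz hws hvw) hnadj
        · exact Or.inr rfl
      · left; left
        apply hSmax _ hmuv.1
        intro z hz
        rcases eq_or_ne z u with rfl | hzu
        · exact Or.inl rfl
        rcases (hadj z).1 (hScl hus hz hzu.symm) with rfl | rfl
        · exact Or.inr rfl
        · exact absurd hz hws
    · right
      have hScl' : (delVert G u).IsClique S := by
        intro a ha b hb hne
        exact ⟨hScl ha hb hne, fun h => hus (h ▸ ha), fun h => hus (h ▸ hb)⟩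
      refine ⟨⟨hScl', ?_⟩, hcard⟩
      intro T hT hsub
      exact hSmax T (fun a ha b hb hne => (hT ha hb hne).1) hsub
  · rintro ((rfl | rfl) | ⟨⟨hScl', hSmax'⟩, hcard⟩)
    · exact ⟨hmuv, by rw [Set.ncard_pair hneuv]⟩
    · exact ⟨hmuw, by rw [Set.ncard_pair hneuw]⟩
    · obtain ⟨a, b, ha, hb, hab⟩ := (Set.one_lt_ncard_iff S.toFinite).1 hcard
      have hus : u ∉ S := by
        intro husS
        rcases eq_or_ne a u with rfl | hau
        · exact (hScl' hb husS (Ne.symm hab)).2.2 rfl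
        · exact (hScl' ha husS hau).2.2 rfl
      have hScl : G.IsClique S := fun x hx y hy hne => (hScl' hx hy hne).1
      refine ⟨⟨hScl, ?_⟩, hcard⟩
      intro T hT hsub
      have huT : u ∉ T := by
        intro huT
        have hau : a ≠ u := fun h => hus (h ▸ ha)
        have hbu : b ≠ u := fun h => hus (h ▸ hb)
        have haadj := (hadj a).1 ((hT huT (hsub ha) hau.symm))
        have hbadj := (hadj b).1 ((hT huT (hsub hb) hbu.symm))
        have habadj : G.Adj a b := (hScl' ha hb hab).1
        rcases haadj with rfl | rfl <;> rcases hbadj with rfl | rfl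
        · exact hab rfl
        · exact hnadj habadj
        · exact hnadj habadj.symm
        · exact hab rfl
      exact hSmax' T (fun x hx y hy hne =>
        ⟨hT hx hy hne, fun h => huT (h ▸ hx), fun h => huT (h ▸ hy)⟩) hsub
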